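/- Let G be a topologically sorted DAG on n nodes with |E| edges. Then the field of fractions of the integral domain R ⧸ p_G is isomorphic as a ℂ-algebra to the field of rational functions in n + |E| variables over ℂ, i.e., to the fraction field of MvPolynomial (Fin (n + |E|)) ℂ. -/

import Mathlib

open MvPolynomial Matrix

noncomputable section

/-- The parent set of a node `j` in the DAG with edge relation `E`. -/
def parents {n : ℕ} (E : Fin n → Fin n → Prop) [DecidableRel E] (j : Fin n) : Finset (Fin n) :=
  Finset.univ.filter (fun i => E i j)

/-- The minor of `M` with rows `A` and columns `B`, each listed in increasing order. -/
def fminor {n : ℕ} {R : Type*} [CommRing R] (M : Matrix (Fin n) (Fin n) R)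
    (A B : Finset (Fin n)) (h : B.card = A.card) : R :=
  Matrix.det (Matrix.of fun k l : Fin A.card =>
    M (A.orderEmbOfFin rfl k) (B.orderEmbOfFin h l))

/-- The generic symmetric matrix, with `(i,j)` entry the variable indexed by the unordered
pair `s(i,j)`. -/
def genMat (n : ℕ) : Matrix (Fin n) (Fin n) (MvPolynomial (Sym2 (Fin n)) ℂ) :=
  fun i j => X (s(i, j))

/-- The ideal of imposed relations `I_G`, generated by the minors `det M_{{i}∪K,{j}∪K}` over all
pairs `i < j` with `¬ E i j`, where `K = pa(j)`. -/
def impIdeal {n : ℕ} (E : Fin n → Fin n → Prop) [DecidableRel E] :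
    Ideal (MvPolynomial (Sym2 (Fin n)) ℂ) :=
  Ideal.span { f | ∃ i j : Fin n, ∃ _ : i < j, ∃ _ : ¬ E i j,
    ∃ h : (insert j (parents E j)).card = (insert i (parents E j)).card,
      f = fminor (genMat n) (insert i (parents E j)) (insert j (parents E j)) h }

/-- The product `θ₀` of all principal minors of the generic symmetric matrix. -/
def theta0 (n : ℕ) : MvPolynomial (Sym2 (Fin n)) ℂ :=
  ∏ A : Finset (Fin n), fminor (genMat n) A A rfl

/-- The saturation `{f | ∃ m, g ^ m * f ∈ I}` of an ideal `I` at an element `g`. -/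
def satIdeal {R : Type*} [CommRing R] (I : Ideal R) (g : R) : Ideal R where
  carrier := {f | ∃ m : ℕ, g ^ m * f ∈ I}
  zero_mem' := ⟨0, by simp⟩
  add_mem' := by
    rintro a b ⟨ma, ha⟩ ⟨mb, hb⟩
    refine ⟨ma + mb, ?_⟩
    have h : g ^ (ma + mb) * (a + b) = g ^ mb * (g ^ ma * a) + g ^ ma * (g ^ mb * b) := by
      ring
    rw [h]
    exact I.add_mem (I.mul_mem_left _ ha) (I.mul_mem_left _ hb)
  smul_mem' := by
    rintro c a ⟨m, hm⟩
    refine ⟨m, ?_⟩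
    have h : g ^ m * (c • a) = c * (g ^ m * a) := by
      simp only [smul_eq_mul]; ring
    rw [h]
    exact I.mul_mem_left _ hm


/-- The saturation `p_G` of `I_G` at `θ₀`. -/
def satPG {n : ℕ} (E : Fin n → Fin n → Prop) [DecidableRel E] :
    Ideal (MvPolynomial (Sym2 (Fin n)) ℂ) :=
  satIdeal (impIdeal E) (theta0 n)

/-- The number of edges of the DAG. -/
def edgeCount {n : ℕ} (E : Fin n → Fin n → Prop) [DecidableRel E] : ℕ :=
  (Finset.univ.filter (fun p : Fin n × Fin n => E p.1 p.2)).card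


open Finset
namespace DagRat




variable {S : Type*} [CommRing S] {n : ℕ}

lemma pow_apply_eq_zero (Λ : Matrix (Fin n) (Fin n) S)
    (hΛ : ∀ i j : Fin n, ¬ i < j → Λ i j = 0) :
    ∀ (k : ℕ) (i j : Fin n), (j : ℕ) < (i : ℕ) + k → (Λ ^ k) i j = 0 := by
  intro k
  induction k with
  | zero =>
    intro i j h
    have hij : i ≠ j := by
      intro e; subst e; omega
    simp [Matrix.one_apply_ne hij]
  | succ k ih =>
    intro i j h
    rw [pow_succ, Matrix.mul_apply]
    apply Finset.sum_eq_zero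
    intro l _
    by_cases hl : (l : ℕ) < (i : ℕ) + k
    · rw [ih i l hl, zero_mul]
    · rw [hΛ l j (by rw [Fin.lt_def]; omega), mul_zero]

lemma strictUpper_pow_n (Λ : Matrix (Fin n) (Fin n) S)
    (hΛ : ∀ i j : Fin n, ¬ i < j → Λ i j = 0) : Λ ^ n = 0 := by
  ext i j
  exact pow_apply_eq_zero Λ hΛ n i j (by omega)

/-- The inverse of `1 - Λ` for `Λ` strictly upper triangular. -/
def unipB (Λ : Matrix (Fin n) (Fin n) S) : Matrix (Fin n) (Fin n) S :=
  ∑ m ∈ Finset.range n, Λ ^ m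

lemma unipB_mul (Λ : Matrix (Fin n) (Fin n) S)
    (hΛ : ∀ i j : Fin n, ¬ i < j → Λ i j = 0) : unipB Λ * (1 - Λ) = 1 := by
  have h := geom_sum_mul Λ n
  rw [strictUpper_pow_n Λ hΛ] at h
  have : unipB Λ * (1 - Λ) = -((∑ m ∈ Finset.range n, Λ ^ m) * (Λ - 1)) := by
    unfold unipB; rw [← mul_neg, neg_sub]
  rw [this, h]; simp

lemma mul_unipB (Λ : Matrix (Fin n) (Fin n) S)
    (hΛ : ∀ i j : Fin n, ¬ i < j → Λ i j = 0) : (1 - Λ) * unipB Λ = 1 := by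
  have h := mul_geom_sum Λ n
  rw [strictUpper_pow_n Λ hΛ] at h
  have : (1 - Λ) * unipB Λ = -((Λ - 1) * ∑ m ∈ Finset.range n, Λ ^ m) := by
    unfold unipB; rw [← neg_mul, neg_sub]
  rw [this, h]; simp

lemma unipB_apply_lower (Λ : Matrix (Fin n) (Fin n) S)
    (hΛ : ∀ i j : Fin n, ¬ i < j → Λ i j = 0) {i j : Fin n} (h : j < i) :
    unipB Λ i j = 0 := by
  unfold unipB
  rw [Matrix.sum_apply]
  apply Finset.sum_eq_zero
  intro m _
  exact pow_apply_eq_zero Λ hΛ m i j (by rw [Fin.lt_def] at h; omega)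

lemma unipB_apply_diag (Λ : Matrix (Fin n) (Fin n) S)
    (hΛ : ∀ i j : Fin n, ¬ i < j → Λ i j = 0) (hn : 0 < n) (j : Fin n) :
    unipB Λ j j = 1 := by
  unfold unipB
  rw [Matrix.sum_apply]
  rw [Finset.sum_eq_single 0]
  · simp
  · intro m _ hm
    exact pow_apply_eq_zero Λ hΛ m j j (by omega)
  · intro h; exact absurd (Finset.mem_range.2 hn) h

/-- The covariance matrix determined by edge weights `Λ` and diagonal `ω`. -/
def sigmaOf (Λ : Matrix (Fin n) (Fin n) S) (ω : Fin n → S) : Matrix (Fin n) (Fin n) S :=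
  (unipB Λ)ᵀ * Matrix.diagonal ω * unipB Λ

lemma sigmaOf_symm (Λ : Matrix (Fin n) (Fin n) S) (ω : Fin n → S) (i j : Fin n) :
    sigmaOf Λ ω i j = sigmaOf Λ ω j i := by
  have : (sigmaOf Λ ω)ᵀ = sigmaOf Λ ω := by
    unfold sigmaOf
    rw [Matrix.transpose_mul, Matrix.transpose_mul, Matrix.transpose_transpose,
      Matrix.diagonal_transpose, Matrix.mul_assoc]
  conv_lhs => rw [← this]
  rfl

lemma sigmaOf_mul_one_sub (Λ : Matrix (Fin n) (Fin n) S) (ω : Fin n → S)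
    (hΛ : ∀ i j : Fin n, ¬ i < j → Λ i j = 0) :
    sigmaOf Λ ω * (1 - Λ) = (unipB Λ)ᵀ * Matrix.diagonal ω := by
  unfold sigmaOf
  rw [Matrix.mul_assoc, Matrix.mul_assoc, unipB_mul Λ hΛ, Matrix.mul_one]

lemma sigmaOf_rel (Λ : Matrix (Fin n) (Fin n) S) (ω : Fin n → S)
    (hΛ : ∀ i j : Fin n, ¬ i < j → Λ i j = 0) {k j : Fin n} (hkj : k < j) :
    sigmaOf Λ ω k j = ∑ i, sigmaOf Λ ω k i * Λ i j := by
  have h := congrFun (congrFun (sigmaOf_mul_one_sub Λ ω hΛ) k) j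
  rw [Matrix.mul_sub, Matrix.mul_one] at h
  rw [Matrix.sub_apply, Matrix.mul_apply] at h
  rw [Matrix.mul_diagonal] at h
  rw [Matrix.transpose_apply, unipB_apply_lower Λ hΛ hkj, zero_mul] at h
  linear_combination h

lemma sigmaOf_diag (Λ : Matrix (Fin n) (Fin n) S) (ω : Fin n → S)
    (hΛ : ∀ i j : Fin n, ¬ i < j → Λ i j = 0) (hn : 0 < n) (j : Fin n) :
    sigmaOf Λ ω j j - ∑ i, sigmaOf Λ ω j i * Λ i j = ω j := by
  have h := congrFun (congrFun (sigmaOf_mul_one_sub Λ ω hΛ) j) j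
  rw [Matrix.mul_sub, Matrix.mul_one] at h
  rw [Matrix.sub_apply, Matrix.mul_apply] at h
  rw [Matrix.mul_diagonal] at h
  rw [Matrix.transpose_apply, unipB_apply_diag Λ hΛ hn, one_mul] at h
  linear_combination h

/-- Reconstruction: a symmetric matrix satisfying the regression relations is `sigmaOf`. -/
lemma eq_sigmaOf (Sg Λ : Matrix (Fin n) (Fin n) S)
    (hsymm : ∀ i j, Sg i j = Sg j i)
    (hΛ : ∀ i j : Fin n, ¬ i < j → Λ i j = 0)
    (hrel : ∀ k j : Fin n, k < j → Sg k j = ∑ i, Sg k i * Λ i j) :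
    Sg = sigmaOf Λ (fun j => Sg j j - ∑ i, Sg j i * Λ i j) := by
  set ω : Fin n → S := fun j => Sg j j - ∑ i, Sg j i * Λ i j with hω
  set M : Matrix (Fin n) (Fin n) S := Sg * (1 - Λ) with hM
  have hMapply : ∀ k j, M k j = Sg k j - ∑ i, Sg k i * Λ i j := by
    intro k j
    rw [hM, Matrix.mul_sub, Matrix.mul_one, Matrix.sub_apply, Matrix.mul_apply]
  have hMlow : ∀ k j : Fin n, k < j → M k j = 0 := by
    intro k j h; rw [hMapply, hrel k j h, sub_self]
  have hMdiag : ∀ j, M j j = ω j := fun j => hMapply j j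
  set W : Matrix (Fin n) (Fin n) S := (1 - Λ)ᵀ * M with hW
  have hWapply : ∀ k j, W k j = M k j - ∑ i, Λ i k * M i j := by
    intro k j
    rw [hW, Matrix.mul_apply]
    have : ∀ i, (1 - Λ)ᵀ k i * M i j = (if i = k then M i j else 0) - Λ i k * M i j := by
      intro i
      rw [Matrix.transpose_apply, Matrix.sub_apply, Matrix.one_apply]
      by_cases h : i = k <;> simp [h, sub_mul]
    rw [Finset.sum_congr rfl (fun i _ => this i), Finset.sum_sub_distrib,
      Finset.sum_ite_eq' Finset.univ k (fun i => M i j)]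
    simp
  have hWdiagonal : W = Matrix.diagonal ω := by
    have hWsymm : Wᵀ = W := by
      rw [hW, hM]
      have hSg : Sgᵀ = Sg := by ext i j; exact hsymm j i
      rw [← Matrix.mul_assoc, Matrix.transpose_mul, Matrix.transpose_mul,
        Matrix.transpose_transpose, hSg, Matrix.mul_assoc]
    have hWlow : ∀ k j : Fin n, k < j → W k j = 0 := by
      intro k j hkj
      rw [hWapply, hMlow k j hkj, zero_sub, neg_eq_zero]
      apply Finset.sum_eq_zero
      intro i _
      by_cases hik : i < k
      · rw [hMlow i j (hik.trans hkj), mul_zero]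
      · rw [hΛ i k hik, zero_mul]
    ext a b
    rcases lt_trichotomy a b with h | h | h
    · rw [hWlow a b h, Matrix.diagonal_apply_ne _ h.ne]
    · subst h
      rw [Matrix.diagonal_apply_eq]
      rw [hWapply]
      have : ∀ i, Λ i a * M i a = 0 := by
        intro i
        by_cases hia : i < a
        · rw [hMlow i a hia, mul_zero]
        · rw [hΛ i a hia, zero_mul]
      rw [Finset.sum_congr rfl (fun i _ => this i)]
      simp [hMdiag]
    · rw [show W a b = W b a from congrFun (congrFun hWsymm b) a,
        hWlow b a h, Matrix.diagonal_apply_ne _ h.ne']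
  -- From W = (1-Λ)ᵀ * Sg * (1-Λ) = diagonal ω, deduce Sg = sigmaOf Λ ω
  have key : (unipB Λ)ᵀ * W * unipB Λ = Sg := by
    rw [hW, hM]
    rw [show (1 - Λ)ᵀ * (Sg * (1 - Λ)) = (1 - Λ)ᵀ * Sg * (1 - Λ) from
      (Matrix.mul_assoc _ _ _).symm]
    have h1 : (unipB Λ)ᵀ * ((1 - Λ)ᵀ * Sg * (1 - Λ)) * unipB Λ
        = ((1 - Λ) * unipB Λ)ᵀ * Sg * ((1 - Λ) * unipB Λ) := by
      simp only [Matrix.transpose_mul]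
      noncomm_ring
    rw [h1, mul_unipB Λ hΛ]
    simp
  rw [hWdiagonal] at key
  show Sg = (unipB Λ)ᵀ * Matrix.diagonal ω * unipB Λ
  exact key.symm


variable {n : ℕ}

lemma sum_orderEmbOfFin {β : Type*} [AddCommMonoid β] (s : Finset (Fin n)) (f : Fin n → β) :
    ∑ i ∈ s, f i = ∑ r : Fin s.card, f (s.orderEmbOfFin rfl r) := by
  rw [← Finset.sum_coe_sort s f]
  exact Fintype.sum_equiv (s.orderIsoOfFin rfl).toEquiv.symm _ _
    (fun x => by
      congr 1
      rw [← Finset.coe_orderIsoOfFin_apply]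
      simp)

lemma snoc_embed (K : Finset (Fin n)) (j : Fin n) (hj : ∀ x ∈ K, x < j)
    (hB : (insert j K).card = K.card + 1) :
    ⇑((insert j K).orderEmbOfFin hB) =
      Fin.snoc (fun r : Fin K.card => K.orderEmbOfFin rfl r) j := by
  symm
  apply Finset.orderEmbOfFin_unique
  · intro x
    refine Fin.lastCases ?_ ?_ x
    · rw [Fin.snoc_last]; exact Finset.mem_insert_self _ _
    · intro r; rw [Fin.snoc_castSucc]
      exact Finset.mem_insert_of_mem (Finset.orderEmbOfFin_mem K rfl r)
  · intro a b hab
    induction b using Fin.lastCases with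
    | last =>
      rw [Fin.snoc_last]
      rcases Fin.exists_castSucc_eq.2 hab.ne with ⟨a', rfl⟩
      rw [Fin.snoc_castSucc]
      exact hj _ (Finset.orderEmbOfFin_mem K rfl a')
    | cast b' =>
      have ha : a ≠ Fin.last _ := by
        intro h; subst h
        exact (Fin.castSucc_lt_last b').asymm hab
      rcases Fin.exists_castSucc_eq.2 ha with ⟨a', rfl⟩
      rw [Fin.snoc_castSucc, Fin.snoc_castSucc]
      exact (K.orderEmbOfFin rfl).strictMono (by
        rwa [Fin.castSucc_lt_castSucc_iff] at hab)

lemma embB_last (K : Finset (Fin n)) (j : Fin n) (hj : ∀ x ∈ K, x < j)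
    (hB : (insert j K).card = K.card + 1) :
    (insert j K).orderEmbOfFin hB (Fin.last K.card) = j := by
  rw [show ((insert j K).orderEmbOfFin hB) (Fin.last K.card)
      = (⇑((insert j K).orderEmbOfFin hB)) (Fin.last K.card) from rfl,
    snoc_embed K j hj hB, Fin.snoc_last]

lemma embB_castSucc (K : Finset (Fin n)) (j : Fin n) (hj : ∀ x ∈ K, x < j)
    (hB : (insert j K).card = K.card + 1) (r : Fin K.card) :
    (insert j K).orderEmbOfFin hB r.castSucc = K.orderEmbOfFin rfl r := by
  rw [show ((insert j K).orderEmbOfFin hB) r.castSucc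
      = (⇑((insert j K).orderEmbOfFin hB)) r.castSucc from rfl,
    snoc_embed K j hj hB, Fin.snoc_castSucc]

/-- The position of `k` in the sorted listing of `insert k K`. -/
def posOf (K : Finset (Fin n)) (k : Fin n) (hA : (insert k K).card = K.card + 1) :
    Fin (K.card + 1) :=
  ((insert k K).orderIsoOfFin hA).symm ⟨k, Finset.mem_insert_self k K⟩

lemma embA_posOf (K : Finset (Fin n)) (k : Fin n) (hA : (insert k K).card = K.card + 1) :
    (insert k K).orderEmbOfFin hA (posOf K k hA) = k := by
  rw [← Finset.coe_orderIsoOfFin_apply]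
  unfold posOf
  rw [OrderIso.apply_symm_apply]

lemma embA_succAbove (K : Finset (Fin n)) (k : Fin n) (hk : k ∉ K)
    (hA : (insert k K).card = K.card + 1) (r : Fin K.card) :
    (insert k K).orderEmbOfFin hA ((posOf K k hA).succAbove r) = K.orderEmbOfFin rfl r := by
  have : (fun r : Fin K.card =>
      (insert k K).orderEmbOfFin hA ((posOf K k hA).succAbove r)) = ⇑(K.orderEmbOfFin rfl) := by
    apply Finset.orderEmbOfFin_unique
    · intro x
      have hmem : (insert k K).orderEmbOfFin hA ((posOf K k hA).succAbove x) ∈ insert k K :=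
        Finset.orderEmbOfFin_mem _ hA _
      rcases Finset.mem_insert.1 hmem with h | h
      · exfalso
        have := embA_posOf K k hA
        have hinj := ((insert k K).orderEmbOfFin hA).injective
        have : (posOf K k hA).succAbove x = posOf K k hA := hinj (by rw [h, this])
        exact Fin.succAbove_ne _ x this
      · exact h
    · exact ((insert k K).orderEmbOfFin hA).strictMono.comp (Fin.strictMono_succAbove _)
  exact congrFun this r

lemma fminor_eq_det {R : Type*} [CommRing R] (M : Matrix (Fin n) (Fin n) R)
    (A B : Finset (Fin n)) (h : B.card = A.card) {m : ℕ} (hA : A.card = m) (hB : B.card = m) :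
    fminor M A B h =
      (Matrix.of fun r l : Fin m => M (A.orderEmbOfFin hA r) (B.orderEmbOfFin hB l)).det := by
  subst hA
  rfl

lemma map_fminor {R S' : Type*} [CommRing R] [CommRing S'] (f : R →+* S')
    (M : Matrix (Fin n) (Fin n) R) (A B : Finset (Fin n)) (h : B.card = A.card) :
    f (fminor M A B h) = fminor (M.map f) A B h := by
  unfold fminor
  rw [RingHom.map_det]
  congr 1

variable {n : ℕ}

/-- Over a field: a minor whose last column is a linear combination of the others vanishes. -/
lemma fminor_eq_zero_of_rel {F : Type*} [Field F] (Sg : Matrix (Fin n) (Fin n) F)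
    (c : Fin n → F) (K : Finset (Fin n)) (j : Fin n) (hj : ∀ x ∈ K, x < j)
    (A : Finset (Fin n)) (h : (insert j K).card = A.card)
    (hrel : ∀ r ∈ A, Sg r j = ∑ i ∈ K, c i * Sg r i) :
    fminor Sg A (insert j K) h = 0 := by
  have hjK : j ∉ K := fun hm => lt_irrefl j (hj j hm)
  have hB : (insert j K).card = K.card + 1 := Finset.card_insert_of_notMem hjK
  have hA : A.card = K.card + 1 := h ▸ hB
  rw [fminor_eq_det Sg A (insert j K) h hA hB]
  set N : Matrix (Fin (K.card + 1)) (Fin (K.card + 1)) F :=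
    Matrix.of fun r l : Fin (K.card + 1) =>
      Sg (A.orderEmbOfFin hA r) ((insert j K).orderEmbOfFin hB l) with hN
  set v : Fin (K.card + 1) → F :=
    Fin.snoc (fun r : Fin K.card => -(c (K.orderEmbOfFin rfl r))) 1 with hv
  rw [← Matrix.exists_mulVec_eq_zero_iff]
  refine ⟨v, ?_, ?_⟩
  · intro h0
    have := congrFun h0 (Fin.last _)
    rw [hv, Fin.snoc_last] at this
    exact one_ne_zero this
  · funext r
    show (∑ l, N r l * v l) = (0 : F)
    rw [Fin.sum_univ_castSucc]
    simp only [hv, Fin.snoc_castSucc, Fin.snoc_last, hN, Matrix.of_apply]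
    rw [embB_last K j hj hB, mul_one]
    have hsplit : ∀ l : Fin K.card,
        Sg (A.orderEmbOfFin hA r) ((insert j K).orderEmbOfFin hB l.castSucc) *
          (-(c (K.orderEmbOfFin rfl l)))
        = -(c (K.orderEmbOfFin rfl l) * Sg (A.orderEmbOfFin hA r) (K.orderEmbOfFin rfl l)) := by
      intro l
      rw [embB_castSucc K j hj hB]
      ring
    rw [Finset.sum_congr rfl (fun l _ => hsplit l), Finset.sum_neg_distrib]
    rw [hrel _ (Finset.orderEmbOfFin_mem A hA r),
      sum_orderEmbOfFin K (fun i => c i * Sg (A.orderEmbOfFin hA r) i)]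
    exact neg_add_cancel _

/-- Over a commutative ring: from a vanishing minor with an invertible principal minor,
extract the remaining linear relation. -/
lemma rel_of_fminor_eq_zero {S : Type*} [CommRing S] (Sg : Matrix (Fin n) (Fin n) S)
    (c : Fin n → S) (K : Finset (Fin n)) (j k : Fin n) (hj : ∀ x ∈ K, x < j)
    (hkj : k < j) (hkK : k ∉ K)
    (h : (insert j K).card = (insert k K).card)
    (hdet0 : fminor Sg (insert k K) (insert j K) h = 0)
    (hu : IsUnit (fminor Sg K K rfl))
    (hrel : ∀ r ∈ K, Sg r j = ∑ i ∈ K, c i * Sg r i) :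
    Sg k j = ∑ i ∈ K, c i * Sg k i := by
  have hjK : j ∉ K := fun hm => lt_irrefl j (hj j hm)
  have hB : (insert j K).card = K.card + 1 := Finset.card_insert_of_notMem hjK
  have hA : (insert k K).card = K.card + 1 := Finset.card_insert_of_notMem hkK
  set m := K.card with hm
  set N : Matrix (Fin (m + 1)) (Fin (m + 1)) S :=
    Matrix.of fun r l : Fin (m + 1) =>
      Sg ((insert k K).orderEmbOfFin hA r) ((insert j K).orderEmbOfFin hB l) with hN
  have hdetN : N.det = 0 := by
    rw [← fminor_eq_det Sg (insert k K) (insert j K) h hA hB] at *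
    exact hdet0
  set v : Fin (m + 1) → S := Fin.snoc (fun r : Fin m => -(c (K.orderEmbOfFin rfl r))) 1 with hv
  set ε : S := Sg k j - ∑ i ∈ K, c i * Sg k i with hε
  set pos : Fin (m + 1) := posOf K k hA with hpos
  have hNv : N *ᵥ v = fun r => if r = pos then ε else 0 := by
    funext r
    show (∑ l, N r l * v l) = _
    rw [Fin.sum_univ_castSucc]
    simp only [hv, Fin.snoc_castSucc, Fin.snoc_last, hN, Matrix.of_apply]
    rw [embB_last K j hj hB, mul_one]
    have hsplit : ∀ l : Fin m,
        Sg ((insert k K).orderEmbOfFin hA r) ((insert j K).orderEmbOfFin hB l.castSucc) *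
          (-(c (K.orderEmbOfFin rfl l)))
        = -(c (K.orderEmbOfFin rfl l) *
            Sg ((insert k K).orderEmbOfFin hA r) (K.orderEmbOfFin rfl l)) := by
      intro l
      rw [embB_castSucc K j hj hB]
      ring
    rw [Finset.sum_congr rfl (fun l _ => hsplit l), Finset.sum_neg_distrib]
    by_cases hr : r = pos
    · subst hr
      rw [embA_posOf K k hA, ← sum_orderEmbOfFin K (fun i => c i * Sg k i)]
      rw [if_pos rfl, hε]
      ring
    · rw [if_neg hr]
      rcases Fin.exists_succAbove_eq (by exact fun e => hr e : r ≠ pos) with ⟨r', rfl⟩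
      rw [embA_succAbove K k hkK hA r']
      rw [← sum_orderEmbOfFin K (fun i => c i * Sg (K.orderEmbOfFin rfl r') i)]
      rw [hrel _ (Finset.orderEmbOfFin_mem K rfl r')]
      ring
  -- multiply by the adjugate
  have hadj : ∀ r, ε * (N.adjugate r pos) = 0 := by
    intro r
    have h1 : N.adjugate *ᵥ (N *ᵥ v) = N.det • v := by
      rw [Matrix.mulVec_mulVec, Matrix.adjugate_mul, Matrix.smul_mulVec,
        Matrix.one_mulVec]
    rw [hdetN, zero_smul, hNv] at h1
    have h2 : (N.adjugate *ᵥ fun l => if l = pos then ε else 0) r = 0 := by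
      rw [h1]; rfl
    have h3 : (N.adjugate *ᵥ fun l => if l = pos then ε else 0) r
        = N.adjugate r pos * ε := by
      show (∑ l, N.adjugate r l * (if l = pos then ε else 0)) = _
      rw [Finset.sum_eq_single pos]
      · rw [if_pos rfl]
      · intro b _ hb; rw [if_neg hb, mul_zero]
      · intro hmem; exact absurd (Finset.mem_univ pos) hmem
    rw [h3] at h2
    rw [mul_comm]
    exact h2
  -- compute the adjugate entry at (last, pos)
  have hadjval : N.adjugate (Fin.last m) pos
      = (-1) ^ ((pos : ℕ) + (m : ℕ)) * fminor Sg K K rfl := by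
    rw [Matrix.adjugate_apply]
    rw [Matrix.det_succ_row _ pos]
    rw [Finset.sum_eq_single (Fin.last m)]
    · rw [Matrix.updateRow_self]
      rw [Pi.single_eq_same]
      have hsub : (N.updateRow pos (Pi.single (Fin.last m) 1)).submatrix
          pos.succAbove (Fin.last m).succAbove
          = Matrix.of fun r l : Fin m => Sg (K.orderEmbOfFin rfl r) (K.orderEmbOfFin rfl l) := by
        funext r l
        rw [Matrix.submatrix_apply]
        rw [Matrix.updateRow_ne (Fin.succAbove_ne pos r)]
        rw [Fin.succAbove_last]
        show Sg _ _ = _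
        rw [embA_succAbove K k hkK hA r, embB_castSucc K j hj hB l]
        rfl
      rw [hsub]
      rw [fminor_eq_det Sg K K rfl rfl rfl]
      simp [Fin.val_last]
      rfl
    · intro b _ hb
      rw [Matrix.updateRow_self, Pi.single_eq_of_ne hb, mul_zero, zero_mul]
    · intro hmem; exact absurd (Finset.mem_univ _) hmem
  have := hadj (Fin.last m)
  rw [hadjval] at this
  have hunit : IsUnit ((-1 : S) ^ ((pos : ℕ) + (m : ℕ)) * fminor Sg K K rfl) :=
    (IsUnit.pow _ isUnit_one.neg).mul hu
  have hε0 : ε = 0 := (IsUnit.mul_left_eq_zero hunit).mp this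
  rw [hε] at hε0
  exact sub_eq_zero.mp hε0

section Main

variable {n : ℕ} (E : Fin n → Fin n → Prop) [DecidableRel E]

/-- The equivalence between `Fin n ⊕ edges` and `Fin (n + |E|)`. -/
def nuE : (Fin n ⊕ {p : Fin n × Fin n // E p.1 p.2}) ≃ Fin (n + edgeCount E) :=
  Fintype.equivFinOfCardEq (by
    rw [Fintype.card_sum, Fintype.card_fin, Fintype.card_subtype]
    rfl)

/-- The generic edge-weight matrix over the polynomial ring in `n + |E|` variables. -/
def lamP : Matrix (Fin n) (Fin n) (MvPolynomial (Fin (n + edgeCount E)) ℂ) :=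
  fun i j => if h : E i j then MvPolynomial.X (nuE E (Sum.inr ⟨(i, j), h⟩)) else 0

/-- The generic diagonal entries. -/
def omgP (j : Fin n) : MvPolynomial (Fin (n + edgeCount E)) ℂ :=
  MvPolynomial.X (nuE E (Sum.inl j))

lemma lamP_supp {i j : Fin n} (h : ¬ E i j) : lamP E i j = 0 := dif_neg h

lemma lamP_strict (hE : ∀ i j, E i j → i < j) (i j : Fin n) (h : ¬ i < j) :
    lamP E i j = 0 :=
  lamP_supp E (fun he => h (hE i j he))

/-- The parametrizing algebra homomorphism `φ`. -/
def phiR : MvPolynomial (Sym2 (Fin n)) ℂ →ₐ[ℂ] MvPolynomial (Fin (n + edgeCount E)) ℂ :=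
  MvPolynomial.aeval (Sym2.lift ⟨fun i j => sigmaOf (lamP E) (omgP E) i j,
    fun i j => sigmaOf_symm (lamP E) (omgP E) i j⟩)

lemma phiR_X (i j : Fin n) :
    phiR E (MvPolynomial.X (s(i, j))) = sigmaOf (lamP E) (omgP E) i j := by
  unfold phiR
  rw [MvPolynomial.aeval_X, Sym2.lift_mk]

lemma phiR_genMat :
    (genMat n).map (phiR E) = sigmaOf (lamP E) (omgP E) := by
  funext i j
  show phiR E (genMat n i j) = _
  exact phiR_X E i j

lemma map_sigmaOf {S S' : Type*} [CommRing S] [CommRing S'] (f : S →+* S')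
    (Λ : Matrix (Fin n) (Fin n) S) (ω : Fin n → S) :
    (sigmaOf Λ ω).map f = sigmaOf (Λ.map f) (fun j => f (ω j)) := by
  have hmm : ∀ A B : Matrix (Fin n) (Fin n) S, (A * B).map f = A.map f * B.map f := by
    intro A B
    rw [← RingHom.mapMatrix_apply, ← RingHom.mapMatrix_apply, ← RingHom.mapMatrix_apply,
      _root_.map_mul]
  have hB : (unipB Λ).map f = unipB (Λ.map f) := by
    unfold unipB
    rw [← RingHom.mapMatrix_apply, map_sum]
    congr 1
    funext m
    rw [RingHom.mapMatrix_apply]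
    induction m with
    | zero => simp
    | succ m ih => rw [pow_succ, pow_succ, hmm, ih]
  unfold sigmaOf
  rw [hmm, hmm, ← hB, ← Matrix.transpose_map]
  congr 1
  rw [Matrix.diagonal_map (map_zero f)]

lemma sum_parents {S : Type*} [CommRing S] (Λ : Matrix (Fin n) (Fin n) S)
    (hsupp : ∀ i j : Fin n, ¬ E i j → Λ i j = 0) (g : Fin n → S) (j : Fin n) :
    ∑ i, g i * Λ i j = ∑ i ∈ parents E j, g i * Λ i j := by
  symm
  apply Finset.sum_subset (Finset.subset_univ _)
  intro i _ hi
  rw [hsupp i j (by simpa [parents] using hi), mul_zero]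

/-- The regression relations satisfied by the parametrized covariance matrix. -/
lemma sigP_rel (hE : ∀ i j, E i j → i < j) {k j : Fin n} (hkj : k < j) :
    sigmaOf (lamP E) (omgP E) k j
      = ∑ i ∈ parents E j, lamP E i j * sigmaOf (lamP E) (omgP E) k i := by
  rw [sigmaOf_rel (lamP E) (omgP E) (lamP_strict E hE) hkj,
    sum_parents E (lamP E) (fun i j => lamP_supp E) _ j]
  exact Finset.sum_congr rfl (fun i _ => mul_comm _ _)

/-- `φ` kills the generators of `I_G`. -/
lemma phiR_gen_eq_zero (hE : ∀ i j, E i j → i < j) {i j : Fin n} (hij : i < j)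
    (hnij : ¬ E i j) (h : (insert j (parents E j)).card = (insert i (parents E j)).card) :
    phiR E (fminor (genMat n) (insert i (parents E j)) (insert j (parents E j)) h) = 0 := by
  set P := MvPolynomial (Fin (n + edgeCount E)) ℂ
  set KK := FractionRing P
  have hι : Function.Injective (algebraMap P KK) := IsFractionRing.injective P KK
  apply hι
  rw [map_zero]
  rw [show (algebraMap P KK) (phiR E (fminor (genMat n) _ _ h))
      = ((algebraMap P KK).comp (phiR E : _ →+* P)) (fminor (genMat n) _ _ h) from rfl]
  rw [map_fminor]
  set Sg := (genMat n).map ((algebraMap P KK).comp (phiR E : _ →+* P)) with hSg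
  have hparents_lt : ∀ x ∈ parents E j, x < j := by
    intro x hx
    exact hE x j (by simpa [parents] using hx)
  apply fminor_eq_zero_of_rel Sg (fun t => (algebraMap P KK) (lamP E t j))
    (parents E j) j hparents_lt
  intro r hr
  have hrj : r < j := by
    rcases Finset.mem_insert.1 hr with h' | h'
    · exact h' ▸ hij
    · exact hparents_lt r h'
  have hSge : ∀ a b : Fin n, Sg a b = (algebraMap P KK) (sigmaOf (lamP E) (omgP E) a b) := by
    intro a b
    rw [hSg]
    show (algebraMap P KK) (phiR E (genMat n a b)) = _
    rw [show genMat n a b = MvPolynomial.X (s(a, b)) from rfl, phiR_X]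
  rw [hSge]
  rw [sigP_rel E hE hrj, map_sum]
  apply Finset.sum_congr rfl
  intro t ht
  rw [hSge r t]
  exact _root_.map_mul _ _ _

/-- An evaluation setting all edge variables to zero. -/
def ev0 : MvPolynomial (Fin (n + edgeCount E)) ℂ →ₐ[ℂ] MvPolynomial (Fin (n + edgeCount E)) ℂ :=
  MvPolynomial.aeval (fun v => Sum.elim (fun j => omgP E j) (fun _ => 0) ((nuE E).symm v))

lemma ev0_omg (j : Fin n) : ev0 E (omgP E j) = omgP E j := by
  unfold ev0 omgP
  rw [MvPolynomial.aeval_X, Equiv.symm_apply_apply]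
  rfl

lemma ev0_lam (i j : Fin n) : ev0 E (lamP E i j) = 0 := by
  unfold ev0 lamP
  by_cases h : E i j
  · rw [dif_pos h, MvPolynomial.aeval_X, Equiv.symm_apply_apply]
    rfl
  · rw [dif_neg h, map_zero]

lemma unipB_zero (hn : 0 < n) {S : Type*} [CommRing S] :
    unipB (0 : Matrix (Fin n) (Fin n) S) = 1 := by
  unfold unipB
  rw [Finset.sum_eq_single 0]
  · rw [pow_zero]
  · intro m _ hm
    rw [zero_pow hm]
  · intro h; exact absurd (Finset.mem_range.2 hn) h

lemma fminor_sigP_ne_zero (hn : 0 < n) (A : Finset (Fin n)) :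
    fminor (sigmaOf (lamP E) (omgP E)) A A rfl ≠ 0 := by
  set f0 : MvPolynomial (Fin (n + edgeCount E)) ℂ →+* MvPolynomial (Fin (n + edgeCount E)) ℂ :=
    (ev0 E).toRingHom with hf0
  intro h0
  have h1 : f0 (fminor (sigmaOf (lamP E) (omgP E)) A A rfl) = 0 := by rw [h0, map_zero]
  rw [map_fminor, map_sigmaOf] at h1
  have hlam0 : (lamP E).map f0 = (0 : Matrix (Fin n) (Fin n) _) := by
    funext a b
    exact ev0_lam E a b
  rw [hlam0] at h1
  unfold sigmaOf at h1
  rw [unipB_zero hn] at h1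
  rw [Matrix.transpose_one, Matrix.one_mul, Matrix.mul_one] at h1
  unfold fminor at h1
  have hdiag : (Matrix.of fun k l : Fin A.card =>
      (Matrix.diagonal fun j => f0 (omgP E j)) (A.orderEmbOfFin rfl k)
        (A.orderEmbOfFin rfl l))
      = Matrix.diagonal (fun k : Fin A.card => f0 (omgP E (A.orderEmbOfFin rfl k))) := by
    funext k l
    by_cases hkl : k = l
    · subst hkl; simp [Matrix.diagonal_apply_eq]
    · rw [Matrix.of_apply, Matrix.diagonal_apply_ne _ hkl,
        Matrix.diagonal_apply_ne _ (fun he => hkl ((A.orderEmbOfFin rfl).injective he))]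
  rw [hdiag, Matrix.det_diagonal] at h1
  have hne : ∀ k : Fin A.card, f0 (omgP E (A.orderEmbOfFin rfl k)) ≠ 0 := by
    intro k
    rw [show f0 (omgP E (A.orderEmbOfFin rfl k)) = ev0 E (omgP E (A.orderEmbOfFin rfl k))
      from rfl, ev0_omg]
    exact MvPolynomial.X_ne_zero _
  exact (Finset.prod_ne_zero_iff.2 (fun k _ => hne k)) h1

lemma phiR_theta0_ne_zero (hn : 0 < n) : phiR E (theta0 n) ≠ 0 := by
  unfold theta0
  rw [map_prod]
  rw [Finset.prod_ne_zero_iff]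
  intro A _
  have heq : phiR E (fminor (genMat n) A A rfl)
      = fminor (sigmaOf (lamP E) (omgP E)) A A rfl := by
    rw [show phiR E (fminor (genMat n) A A rfl)
        = (phiR E : _ →+* _) (fminor (genMat n) A A rfl) from rfl, map_fminor]
    congr 1
    rw [← phiR_genMat E]
    rfl
  rw [heq]
  exact fminor_sigP_ne_zero E hn A

end Main

section Tside

set_option synthInstance.maxHeartbeats 1000000
set_option maxHeartbeats 1600000

variable {n : ℕ} (E : Fin n → Fin n → Prop) [DecidableRel E]

/-- The quotient by the ideal of imposed relations. -/
abbrev Qring : Type := MvPolynomial (Sym2 (Fin n)) ℂ ⧸ impIdeal E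

/-- The localization of the quotient at `θ₀`. -/
def Tring : Type := Localization.Away (Ideal.Quotient.mk (impIdeal E) (theta0 n))

instance : CommRing (Tring E) :=
  inferInstanceAs (CommRing (Localization.Away (Ideal.Quotient.mk (impIdeal E) (theta0 n))))

instance : Algebra (Qring E) (Tring E) :=
  inferInstanceAs (Algebra _ (Localization.Away (Ideal.Quotient.mk (impIdeal E) (theta0 n))))

instance : IsLocalization (Submonoid.powers (Ideal.Quotient.mk (impIdeal E) (theta0 n)))
    (Tring E) :=
  inferInstanceAs (IsLocalization _ (Localization.Away (Ideal.Quotient.mk (impIdeal E) (theta0 n))))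

/-- The canonical map into the localized quotient. -/
def rhoT : MvPolynomial (Sym2 (Fin n)) ℂ →+* Tring E :=
  (algebraMap (Qring E) (Tring E)).comp (Ideal.Quotient.mk (impIdeal E))

/-- The image of the generic symmetric matrix in the localized quotient. -/
def sigT : Matrix (Fin n) (Fin n) (Tring E) := (genMat n).map (rhoT E)

lemma sigT_apply (i j : Fin n) : sigT E i j = rhoT E (MvPolynomial.X (s(i, j))) := rfl

lemma sigT_symm (i j : Fin n) : sigT E i j = sigT E j i := by
  rw [sigT_apply, sigT_apply, Sym2.eq_swap]

lemma rhoT_impIdeal_eq_zero {f : MvPolynomial (Sym2 (Fin n)) ℂ} (hf : f ∈ impIdeal E) :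
    rhoT E f = 0 := by
  unfold rhoT
  rw [RingHom.comp_apply, Ideal.Quotient.eq_zero_iff_mem.2 hf, map_zero]

lemma sigT_fminor_isUnit (A : Finset (Fin n)) : IsUnit (fminor (sigT E) A A rfl) := by
  have h1 : fminor (sigT E) A A rfl = rhoT E (fminor (genMat n) A A rfl) := by
    unfold sigT
    exact (map_fminor (rhoT E) (genMat n) A A rfl).symm
  rw [h1]
  have hθ : IsUnit (rhoT E (theta0 n)) := by
    have h2 : rhoT E (theta0 n)
        = algebraMap (Qring E) (Tring E) (Ideal.Quotient.mk (impIdeal E) (theta0 n)) := rfl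
    rw [h2]
    exact IsLocalization.Away.algebraMap_isUnit
      (S := Tring E) (Ideal.Quotient.mk (impIdeal E) (theta0 n))
  refine isUnit_of_dvd_unit (map_dvd _ ?_) hθ
  unfold theta0
  exact Finset.dvd_prod_of_mem (fun A => fminor (genMat n) A A rfl) (Finset.mem_univ A)

/-- The principal minor over the parent set of `j`. -/
def ATm (j : Fin n) : Matrix (Fin (parents E j).card) (Fin (parents E j).card) (Tring E) :=
  Matrix.of fun r l => sigT E ((parents E j).orderEmbOfFin rfl r) ((parents E j).orderEmbOfFin rfl l)

/-- The righthand side vector. -/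
def bT (j : Fin n) : Fin (parents E j).card → Tring E :=
  fun r => sigT E ((parents E j).orderEmbOfFin rfl r) j

lemma ATm_det_isUnit (j : Fin n) : IsUnit (ATm E j).det :=
  sigT_fminor_isUnit E (parents E j)

/-- The recovered regression coefficients. -/
def lamvec (j : Fin n) : Fin (parents E j).card → Tring E :=
  fun r => Ring.inverse (ATm E j).det * Matrix.cramer (ATm E j) (bT E j) r

lemma ATm_mulVec (j : Fin n) : ATm E j *ᵥ lamvec E j = bT E j := by
  funext r
  show (∑ l, ATm E j r l * (Ring.inverse (ATm E j).det * Matrix.cramer (ATm E j) (bT E j) l))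
    = bT E j r
  have h1 : ∀ l, ATm E j r l * (Ring.inverse (ATm E j).det * Matrix.cramer (ATm E j) (bT E j) l)
      = Ring.inverse (ATm E j).det * (ATm E j r l * Matrix.cramer (ATm E j) (bT E j) l) := by
    intro l; ring
  rw [Finset.sum_congr rfl (fun l _ => h1 l), ← Finset.mul_sum]
  have h2 : (∑ l, ATm E j r l * Matrix.cramer (ATm E j) (bT E j) l)
      = (ATm E j *ᵥ Matrix.cramer (ATm E j) (bT E j)) r := rfl
  rw [h2, Matrix.mulVec_cramer]
  show Ring.inverse (ATm E j).det * ((ATm E j).det * bT E j r) = bT E j r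
  rw [← mul_assoc, Ring.inverse_mul_cancel _ (ATm_det_isUnit E j), one_mul]

lemma mem_parents {i j : Fin n} : i ∈ parents E j ↔ E i j := by
  simp [parents]

/-- The recovered edge-weight matrix. -/
def LamT : Matrix (Fin n) (Fin n) (Tring E) := fun i j =>
  if h : E i j then
    lamvec E j (((parents E j).orderIsoOfFin rfl).symm ⟨i, (mem_parents E).2 h⟩) else 0

lemma LamT_supp {i j : Fin n} (h : ¬ E i j) : LamT E i j = 0 := dif_neg h

lemma LamT_strict (hE : ∀ i j, E i j → i < j) (i j : Fin n) (h : ¬ i < j) :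
    LamT E i j = 0 :=
  LamT_supp E (fun he => h (hE i j he))

lemma LamT_emb (j : Fin n) (r : Fin (parents E j).card) :
    LamT E ((parents E j).orderEmbOfFin rfl r) j = lamvec E j r := by
  have hmem : (parents E j).orderEmbOfFin rfl r ∈ parents E j :=
    Finset.orderEmbOfFin_mem _ rfl r
  have hE' : E ((parents E j).orderEmbOfFin rfl r) j := (mem_parents E).1 hmem
  unfold LamT
  rw [dif_pos hE']
  congr 1
  have h1 : ((parents E j).orderIsoOfFin rfl) r
      = ⟨(parents E j).orderEmbOfFin rfl r, hmem⟩ :=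
    Subtype.ext (Finset.coe_orderIsoOfFin_apply _ rfl r)
  rw [← h1, OrderIso.symm_apply_apply]

lemma sum_LamT (g : Fin n → Tring E) (j : Fin n) :
    ∑ i, g i * LamT E i j
      = ∑ r : Fin (parents E j).card, g ((parents E j).orderEmbOfFin rfl r) * lamvec E j r := by
  rw [sum_parents E (LamT E) (fun i j h => LamT_supp E h) g j,
    sum_orderEmbOfFin (parents E j) (fun i => g i * LamT E i j)]
  apply Finset.sum_congr rfl
  intro r _
  rw [LamT_emb]

lemma relT_row (j : Fin n) : ∀ k ∈ parents E j,
    sigT E k j = ∑ i, sigT E k i * LamT E i j := by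
  intro k hk
  rw [sum_LamT]
  set r0 := ((parents E j).orderIsoOfFin rfl).symm ⟨k, hk⟩ with hr0
  have hemb : (parents E j).orderEmbOfFin rfl r0 = k := by
    rw [← Finset.coe_orderIsoOfFin_apply _ rfl r0, hr0, OrderIso.apply_symm_apply]
  have hrow := congrFun (ATm_mulVec E j) r0
  rw [show (ATm E j *ᵥ lamvec E j) r0
      = ∑ l, ATm E j r0 l * lamvec E j l from rfl] at hrow
  unfold ATm bT at hrow
  simp only [Matrix.of_apply] at hrow
  rw [hemb] at hrow
  exact hrow.symm

lemma relT_all (hE : ∀ i j, E i j → i < j) {k j : Fin n} (hkj : k < j) :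
    sigT E k j = ∑ i, sigT E k i * LamT E i j := by
  by_cases hk : k ∈ parents E j
  · exact relT_row E j k hk
  · have hparents_lt : ∀ x ∈ parents E j, x < j := fun x hx => hE x j ((mem_parents E).1 hx)
    have hjK : j ∉ parents E j := fun hm => lt_irrefl j (hparents_lt j hm)
    have hcard : (insert j (parents E j)).card = (insert k (parents E j)).card := by
      rw [Finset.card_insert_of_notMem hjK, Finset.card_insert_of_notMem hk]
    have hgen : fminor (genMat n) (insert k (parents E j)) (insert j (parents E j)) hcard
        ∈ impIdeal E := by
      apply Ideal.subset_span
      exact ⟨k, j, hkj, fun he => hk ((mem_parents E).2 he), hcard, rfl⟩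
    have hdet0 : fminor (sigT E) (insert k (parents E j)) (insert j (parents E j)) hcard = 0 := by
      have h1 : fminor (sigT E) (insert k (parents E j)) (insert j (parents E j)) hcard
          = rhoT E (fminor (genMat n) (insert k (parents E j)) (insert j (parents E j)) hcard) := by
        unfold sigT
        exact (map_fminor (rhoT E) (genMat n) _ _ hcard).symm
      rw [h1, rhoT_impIdeal_eq_zero E hgen]
    have hrelK : ∀ r ∈ parents E j,
        sigT E r j = ∑ i ∈ parents E j, LamT E i j * sigT E r i := by
      intro r hr
      rw [relT_row E j r hr,
        sum_parents E (LamT E) (fun i j h => LamT_supp E h) (fun i => sigT E r i) j]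
      exact Finset.sum_congr rfl (fun i _ => mul_comm _ _)
    have hconc := rel_of_fminor_eq_zero (sigT E) (fun i => LamT E i j) (parents E j) j k
      hparents_lt hkj hk hcard hdet0 (sigT_fminor_isUnit E (parents E j)) hrelK
    rw [hconc, sum_parents E (LamT E) (fun i j h => LamT_supp E h) (fun i => sigT E k i) j]
    exact Finset.sum_congr rfl (fun i _ => mul_comm _ _)

/-- The recovered diagonal entries. -/
def omgT (j : Fin n) : Tring E := sigT E j j - ∑ i, sigT E j i * LamT E i j

lemma sigT_eq_sigmaOf (hE : ∀ i j, E i j → i < j) :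
    sigT E = sigmaOf (LamT E) (omgT E) :=
  eq_sigmaOf (sigT E) (LamT E) (sigT_symm E) (LamT_strict E hE)
    (fun k j hkj => relT_all E hE hkj)

/-- The inverse parametrization on the polynomial ring in `n + |E|` variables. -/
def psiT : MvPolynomial (Fin (n + edgeCount E)) ℂ →+* Tring E :=
  MvPolynomial.eval₂Hom ((rhoT E).comp MvPolynomial.C)
    (fun v => Sum.elim (fun j => omgT E j) (fun p => LamT E p.1.1 p.1.2) ((nuE E).symm v))

lemma psiT_omg (j : Fin n) : psiT E (omgP E j) = omgT E j := by
  unfold psiT omgP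
  rw [MvPolynomial.eval₂Hom_X', Equiv.symm_apply_apply]
  rfl

lemma psiT_lam (i j : Fin n) : psiT E (lamP E i j) = LamT E i j := by
  unfold psiT lamP
  by_cases h : E i j
  · rw [dif_pos h, MvPolynomial.eval₂Hom_X', Equiv.symm_apply_apply]
    show LamT E i j = _
    rfl
  · rw [dif_neg h, map_zero, LamT_supp E h]

lemma psiT_phiR (hE : ∀ i j, E i j → i < j) (f : MvPolynomial (Sym2 (Fin n)) ℂ) :
    psiT E (phiR E f) = rhoT E f := by
  have hcomp : (psiT E).comp (phiR E : MvPolynomial (Sym2 (Fin n)) ℂ →+* _) = rhoT E := by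
    apply MvPolynomial.ringHom_ext
    · intro c
      rw [RingHom.comp_apply]
      rw [show ((phiR E : MvPolynomial (Sym2 (Fin n)) ℂ →+* _) (MvPolynomial.C c))
          = phiR E (MvPolynomial.C c) from rfl]
      rw [show phiR E (MvPolynomial.C c) = MvPolynomial.C c from by
        unfold phiR; rw [MvPolynomial.aeval_C]; rfl]
      unfold psiT
      rw [MvPolynomial.eval₂Hom_C]
      rfl
    · intro s
      induction s using Sym2.ind with
      | _ i j =>
        rw [RingHom.comp_apply]
        rw [show ((phiR E : MvPolynomial (Sym2 (Fin n)) ℂ →+* _) (MvPolynomial.X (s(i, j))))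
            = phiR E (MvPolynomial.X (s(i, j))) from rfl]
        rw [phiR_X]
        have h1 : psiT E (sigmaOf (lamP E) (omgP E) i j)
            = ((sigmaOf (lamP E) (omgP E)).map (psiT E)) i j := rfl
        have h2 := map_sigmaOf (psiT E) (lamP E) (omgP E)
        have h3 := congrFun (congrFun h2 i) j
        rw [h1, h3]
        have hl : (lamP E).map (psiT E) = LamT E := by
          funext a b; exact psiT_lam E a b
        have ho : (fun j => psiT E (omgP E j)) = omgT E := by
          funext a; exact psiT_omg E a
        rw [hl, ho, ← sigT_eq_sigmaOf E hE]
        rfl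
  exact RingHom.congr_fun hcomp f

lemma ker_le_satPG (hE : ∀ i j, E i j → i < j) (f : MvPolynomial (Sym2 (Fin n)) ℂ)
    (hf : phiR E f = 0) : f ∈ satPG E := by
  have h1 : rhoT E f = 0 := by
    rw [← psiT_phiR E hE, hf, map_zero]
  have h2 : algebraMap (Qring E) (Tring E) (Ideal.Quotient.mk (impIdeal E) f) = 0 := h1
  have h3 := (IsLocalization.map_eq_zero_iff
    (Submonoid.powers (Ideal.Quotient.mk (impIdeal E) (theta0 n))) (Tring E)
    ((Ideal.Quotient.mk (impIdeal E)) f)).mp h2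
  rcases h3 with ⟨⟨m, k, hk⟩, hm⟩
  show ∃ m : ℕ, theta0 n ^ m * f ∈ impIdeal E
  refine ⟨k, ?_⟩
  rw [← Ideal.Quotient.eq_zero_iff_mem, _root_.map_mul, map_pow]
  simp only at hm
  rw [← hk] at hm
  exact hm

end Tside

section Kside

set_option synthInstance.maxHeartbeats 1000000
set_option maxHeartbeats 1600000

variable {n : ℕ} (E : Fin n → Fin n → Prop) [DecidableRel E]

/-- The fraction field of the polynomial ring in `n + |E|` variables, as an opaque type. -/
def KKr : Type := FractionRing (MvPolynomial (Fin (n + edgeCount E)) ℂ)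

instance : Field (KKr E) :=
  inferInstanceAs (Field (FractionRing (MvPolynomial (Fin (n + edgeCount E)) ℂ)))

instance : Algebra (MvPolynomial (Fin (n + edgeCount E)) ℂ) (KKr E) :=
  inferInstanceAs (Algebra _ (FractionRing (MvPolynomial (Fin (n + edgeCount E)) ℂ)))

instance : IsFractionRing (MvPolynomial (Fin (n + edgeCount E)) ℂ) (KKr E) :=
  inferInstanceAs (IsFractionRing _ (FractionRing (MvPolynomial (Fin (n + edgeCount E)) ℂ)))

instance : Algebra ℂ (KKr E) :=
  inferInstanceAs (Algebra ℂ (FractionRing (MvPolynomial (Fin (n + edgeCount E)) ℂ)))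

instance : IsScalarTower ℂ (MvPolynomial (Fin (n + edgeCount E)) ℂ) (KKr E) :=
  inferInstanceAs (IsScalarTower ℂ _ (FractionRing (MvPolynomial (Fin (n + edgeCount E)) ℂ)))

/-- The composite map `R → P → Frac(P)`. -/
def iotaPhi : MvPolynomial (Sym2 (Fin n)) ℂ →+* KKr E :=
  (algebraMap (MvPolynomial (Fin (n + edgeCount E)) ℂ) (KKr E)).comp (phiR E : _ →+* _)

lemma iotaPhi_apply (r : MvPolynomial (Sym2 (Fin n)) ℂ) :
    iotaPhi E r
      = algebraMap (MvPolynomial (Fin (n + edgeCount E)) ℂ) (KKr E) (phiR E r) := rfl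

lemma iotaP_injective :
    Function.Injective (algebraMap (MvPolynomial (Fin (n + edgeCount E)) ℂ) (KKr E)) :=
  IsFractionRing.injective _ _

/-- The set of elements expressible as a fraction of images of `φ`. -/
def FracSet : Set (KKr E) :=
  {z | ∃ a b : MvPolynomial (Sym2 (Fin n)) ℂ, phiR E b ≠ 0 ∧ z * iotaPhi E b = iotaPhi E a}

lemma phiR_C (c : ℂ) : phiR E (MvPolynomial.C c) = MvPolynomial.C c := by
  unfold phiR
  rw [MvPolynomial.aeval_C]
  rfl

lemma phiR_one_ne_zero : phiR E (1 : MvPolynomial (Sym2 (Fin n)) ℂ) ≠ 0 := by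
  rw [_root_.map_one]; exact one_ne_zero

lemma image_mem_fracSet (r : MvPolynomial (Sym2 (Fin n)) ℂ) : iotaPhi E r ∈ FracSet E :=
  ⟨r, 1, phiR_one_ne_zero E, by rw [_root_.map_one, mul_one]⟩

lemma zero_mem_fracSet : (0 : KKr E) ∈ FracSet E := by
  have := image_mem_fracSet E 0
  rwa [_root_.map_zero] at this

lemma mul_mem_fracSet {z w : KKr E} (hz : z ∈ FracSet E) (hw : w ∈ FracSet E) :
    z * w ∈ FracSet E := by
  rcases hz with ⟨a, b, hb, hab⟩
  rcases hw with ⟨c, d, hd, hcd⟩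
  refine ⟨a * c, b * d, ?_, ?_⟩
  · rw [_root_.map_mul]; exact mul_ne_zero hb hd
  · rw [_root_.map_mul, _root_.map_mul]
    calc z * w * (iotaPhi E b * iotaPhi E d) = (z * iotaPhi E b) * (w * iotaPhi E d) := by ring
    _ = iotaPhi E a * iotaPhi E c := by rw [hab, hcd]

lemma add_mem_fracSet {z w : KKr E} (hz : z ∈ FracSet E) (hw : w ∈ FracSet E) :
    z + w ∈ FracSet E := by
  rcases hz with ⟨a, b, hb, hab⟩
  rcases hw with ⟨c, d, hd, hcd⟩
  refine ⟨a * d + c * b, b * d, ?_, ?_⟩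
  · rw [_root_.map_mul]; exact mul_ne_zero hb hd
  · rw [_root_.map_mul, _root_.map_add, _root_.map_mul, _root_.map_mul]
    calc (z + w) * (iotaPhi E b * iotaPhi E d)
        = (z * iotaPhi E b) * iotaPhi E d + (w * iotaPhi E d) * iotaPhi E b := by ring
    _ = _ := by rw [hab, hcd]

lemma neg_mem_fracSet {z : KKr E} (hz : z ∈ FracSet E) : -z ∈ FracSet E := by
  rcases hz with ⟨a, b, hb, hab⟩
  exact ⟨-a, b, hb, by rw [_root_.map_neg, neg_mul, hab]⟩

lemma inv_mem_fracSet {z : KKr E} (hz : z ∈ FracSet E) : z⁻¹ ∈ FracSet E := by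
  by_cases h0 : z = 0
  · rw [h0, _root_.inv_zero]; exact zero_mem_fracSet E
  · rcases hz with ⟨a, b, hb, hab⟩
    have hιb : iotaPhi E b ≠ 0 := by
      intro he
      apply hb
      apply iotaP_injective E
      rw [_root_.map_zero]
      exact he
    have hιa : iotaPhi E a ≠ 0 := by
      rw [← hab]
      exact mul_ne_zero h0 hιb
    have ha : phiR E a ≠ 0 := by
      intro he
      apply hιa
      rw [iotaPhi_apply, he, _root_.map_zero]
    refine ⟨b, a, ha, ?_⟩
    rw [← hab]
    calc z⁻¹ * (z * iotaPhi E b) = (z⁻¹ * z) * iotaPhi E b := by ring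
    _ = iotaPhi E b := by rw [inv_mul_cancel₀ h0, one_mul]

lemma mulVec_cancel {F : Type*} [Field F] {m : ℕ} (A : Matrix (Fin m) (Fin m) F)
    (hd : A.det ≠ 0) {x y : Fin m → F} (h : A *ᵥ x = A *ᵥ y) : x = y := by
  have hu : IsUnit A.det := isUnit_iff_ne_zero.2 hd
  have h2 := congrArg (fun v => A⁻¹ *ᵥ v) h
  simpa [Matrix.mulVec_mulVec, Matrix.nonsing_inv_mul _ hu, Matrix.one_mulVec] using h2

lemma map_updateCol {S S' : Type*} [CommRing S] [CommRing S'] {m : ℕ} (f : S →+* S')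
    (A : Matrix (Fin m) (Fin m) S) (l : Fin m) (b : Fin m → S) :
    (A.updateCol l b).map f = (A.map f).updateCol l (fun r => f (b r)) := by
  funext r' l'
  rw [Matrix.map_apply, Matrix.updateCol_apply, Matrix.updateCol_apply]
  by_cases h : l' = l
  · rw [if_pos h, if_pos h]
  · rw [if_neg h, if_neg h, Matrix.map_apply]

lemma lam_mem_fracSet (hn : 0 < n) (hE : ∀ i j, E i j → i < j) (i j : Fin n) :
    algebraMap (MvPolynomial (Fin (n + edgeCount E)) ℂ) (KKr E) (lamP E i j) ∈ FracSet E := by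
  by_cases hij : E i j
  · -- Cramer's rule recovery
    set P := MvPolynomial (Fin (n + edgeCount E)) ℂ
    set ι : P →+* KKr E := (algebraMap P (KKr E) : P →+* KKr E) with hι
    set K := parents E j with hK
    set m := K.card with hm
    set emb := K.orderEmbOfFin rfl with hemb
    set Rmat : Matrix (Fin m) (Fin m) (MvPolynomial (Sym2 (Fin n)) ℂ) :=
      Matrix.of fun r l => MvPolynomial.X (s(emb r, emb l)) with hRmat
    set bR : Fin m → MvPolynomial (Sym2 (Fin n)) ℂ :=
      fun r => MvPolynomial.X (s(emb r, j)) with hbR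
    set AK : Matrix (Fin m) (Fin m) (KKr E) := Rmat.map (iotaPhi E) with hAK
    set bK : Fin m → KKr E := fun r => iotaPhi E (bR r) with hbK
    set lamcolK : Fin m → KKr E := fun l => ι (lamP E (emb l) j) with hlamcolK
    have hembK : ∀ r : Fin m, emb r ∈ K := fun r => Finset.orderEmbOfFin_mem K rfl r
    have hembj : ∀ r : Fin m, emb r < j := fun r => hE _ j ((mem_parents E).1 (hembK r))
    -- the linear system
    have hsys : AK *ᵥ lamcolK = bK := by
      funext r
      show (∑ l, AK r l * lamcolK l) = bK r
      have h0 : ∀ l, AK r l * lamcolK l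
          = ι (sigmaOf (lamP E) (omgP E) (emb r) (emb l) * lamP E (emb l) j) := by
        intro l
        rw [_root_.map_mul]
        congr 1
        show iotaPhi E (Rmat r l) = _
        unfold iotaPhi
        rw [RingHom.comp_apply]
        congr 1
        show phiR E (MvPolynomial.X (s(emb r, emb l))) = _
        rw [phiR_X]
      rw [Finset.sum_congr rfl (fun l _ => h0 l), ← _root_.map_sum]
      have h1 : (∑ l, sigmaOf (lamP E) (omgP E) (emb r) (emb l) * lamP E (emb l) j)
          = sigmaOf (lamP E) (omgP E) (emb r) j := by
        rw [← sum_orderEmbOfFin K (fun t => sigmaOf (lamP E) (omgP E) (emb r) t * lamP E t j)]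
        rw [sigP_rel E hE (hembj r)]
        exact Finset.sum_congr rfl (fun t _ => mul_comm _ _)
      rw [h1]
      show _ = iotaPhi E (bR r)
      unfold iotaPhi
      rw [RingHom.comp_apply]
      congr 1
      show _ = phiR E (MvPolynomial.X (s(emb r, j)))
      rw [phiR_X]
    -- the determinant is nonzero
    have hdetRmat : phiR E Rmat.det = fminor (sigmaOf (lamP E) (omgP E)) K K rfl := by
      rw [show phiR E Rmat.det = ((phiR E : _ →+* _).mapMatrix Rmat).det from
        RingHom.map_det _ Rmat]
      unfold fminor
      congr 1
      funext r l
      show phiR E (Rmat r l) = _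
      rw [show Rmat r l = MvPolynomial.X (s(emb r, emb l)) from rfl, phiR_X]
      rfl
    have hdetAK : AK.det = ι (phiR E Rmat.det) := by
      rw [show AK.det = ((iotaPhi E).mapMatrix Rmat).det from rfl, ← RingHom.map_det]
      rfl
    have hdet_ne : AK.det ≠ 0 := by
      rw [hdetAK, hdetRmat]
      intro he
      exact fminor_sigP_ne_zero E hn K (iotaP_injective E (by rw [_root_.map_zero]; exact he))
    -- Cramer
    have hcram : Matrix.cramer AK bK = AK.det • lamcolK := by
      apply mulVec_cancel AK hdet_ne
      rw [Matrix.mulVec_cramer, Matrix.mulVec_smul, hsys]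
    -- extract the entry for i
    have hiK : i ∈ K := (mem_parents E).2 hij
    set l0 := (K.orderIsoOfFin rfl).symm ⟨i, hiK⟩ with hl0
    have hembl0 : emb l0 = i := by
      rw [hemb, ← Finset.coe_orderIsoOfFin_apply K rfl l0, hl0, OrderIso.apply_symm_apply]
    have hentry := congrFun hcram l0
    rw [Matrix.cramer_apply] at hentry
    have hupd : (AK.updateCol l0 bK)
        = ((Rmat.updateCol l0 bR).map (iotaPhi E)) := by
      rw [map_updateCol (iotaPhi E) Rmat l0 bR]
    have hnum : (AK.updateCol l0 bK).det = iotaPhi E (Rmat.updateCol l0 bR).det := by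
      rw [hupd, show ((Rmat.updateCol l0 bR).map (iotaPhi E)).det
        = ((iotaPhi E).mapMatrix (Rmat.updateCol l0 bR)).det from rfl, ← RingHom.map_det]
    refine ⟨(Rmat.updateCol l0 bR).det, Rmat.det, ?_, ?_⟩
    · intro he
      apply hdet_ne
      rw [hdetAK, he, _root_.map_zero]
    · rw [← hembl0]
      have : (AK.det • lamcolK) l0 = AK.det * lamcolK l0 := rfl
      rw [← hnum, ← hentry] at *
      show lamcolK l0 * iotaPhi E Rmat.det = (AK.updateCol l0 bK).det
      rw [hentry, this]
      have hAKdet : iotaPhi E Rmat.det = AK.det := by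
        rw [hdetAK]; rfl
      rw [hAKdet]
      ring
  · rw [lamP_supp E hij, _root_.map_zero]
    exact zero_mem_fracSet E

lemma sig_mem_fracSet (a b : Fin n) :
    algebraMap (MvPolynomial (Fin (n + edgeCount E)) ℂ) (KKr E)
      (sigmaOf (lamP E) (omgP E) a b) ∈ FracSet E := by
  have h := image_mem_fracSet E (MvPolynomial.X (s(a, b)))
  rw [iotaPhi_apply, phiR_X] at h
  exact h

lemma omg_mem_fracSet (hn : 0 < n) (hE : ∀ i j, E i j → i < j) (j : Fin n) :
    algebraMap (MvPolynomial (Fin (n + edgeCount E)) ℂ) (KKr E) (omgP E j) ∈ FracSet E := by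
  have hdiag := sigmaOf_diag (lamP E) (omgP E) (lamP_strict E hE) hn j
  rw [← hdiag, _root_.map_sub, _root_.map_sum]
  apply add_mem_fracSet
  · exact sig_mem_fracSet E j j
  · apply neg_mem_fracSet
    apply Finset.sum_induction _ (fun z => z ∈ FracSet E)
      (fun a b ha hb => add_mem_fracSet E ha hb) (zero_mem_fracSet E)
    intro i _
    rw [_root_.map_mul]
    exact mul_mem_fracSet E (sig_mem_fracSet E j i) (lam_mem_fracSet E hn hE i j)

lemma X_mem_fracSet (hn : 0 < n) (hE : ∀ i j, E i j → i < j) (v : Fin (n + edgeCount E)) :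
    algebraMap (MvPolynomial (Fin (n + edgeCount E)) ℂ) (KKr E) (MvPolynomial.X v)
      ∈ FracSet E := by
  have hv : v = nuE E ((nuE E).symm v) := (Equiv.apply_symm_apply _ _).symm
  rcases hcase : (nuE E).symm v with j | e
  · rw [hv, hcase]
    exact omg_mem_fracSet E hn hE j
  · rw [hv, hcase]
    have : MvPolynomial.X ((nuE E) (Sum.inr e))
        = lamP E e.val.1 e.val.2 := by
      unfold lamP
      rw [dif_pos e.prop]
    rw [this]
    exact lam_mem_fracSet E hn hE e.val.1 e.val.2

lemma all_mem_fracSet (hn : 0 < n) (hE : ∀ i j, E i j → i < j)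
    (q : MvPolynomial (Fin (n + edgeCount E)) ℂ) :
    algebraMap (MvPolynomial (Fin (n + edgeCount E)) ℂ) (KKr E) q ∈ FracSet E := by
  induction q using MvPolynomial.induction_on with
  | C c =>
    have h := image_mem_fracSet E (MvPolynomial.C c)
    rw [iotaPhi_apply, phiR_C] at h
    exact h
  | add p q hp hq =>
    rw [_root_.map_add]
    exact add_mem_fracSet E hp hq
  | mul_X p v hp =>
    rw [_root_.map_mul]
    exact mul_mem_fracSet E hp (X_mem_fracSet E hn hE v)

lemma surj_fracSet (hn : 0 < n) (hE : ∀ i j, E i j → i < j) (z : KKr E) : z ∈ FracSet E := by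
  rcases IsFractionRing.div_surjective
    (A := MvPolynomial (Fin (n + edgeCount E)) ℂ) z with ⟨x, y, hy, hxy⟩
  rw [← hxy, div_eq_mul_inv]
  exact mul_mem_fracSet E (all_mem_fracSet E hn hE x)
    (inv_mem_fracSet E (all_mem_fracSet E hn hE y))

end Kside

end DagRat

open DagRat in
set_option synthInstance.maxHeartbeats 1000000 in
set_option maxHeartbeats 3000000 in
/-- Rationality (Proposition 2 of the paper): the fraction field of `R ⧸ p_G` is isomorphic, as
a `ℂ`-algebra, to the field of rational functions in `n + |E|` variables over `ℂ`. -/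
theorem fractionRing_quotient_satPG_rational {n : ℕ} (hn : 1 ≤ n)
    (E : Fin n → Fin n → Prop) [DecidableRel E] (hE : ∀ i j, E i j → i < j) :
    Nonempty
      (FractionRing (MvPolynomial (Sym2 (Fin n)) ℂ ⧸ satPG E) ≃ₐ[ℂ]
        FractionRing (MvPolynomial (Fin (n + edgeCount E)) ℂ)) := by
  classical
  have hn0 : 0 < n := hn
  -- `φ` kills the ideal of imposed relations
  have hIG : ∀ g ∈ impIdeal E, phiR E g = 0 := by
    intro g hg
    have hle : impIdeal E ≤ RingHom.ker (phiR E : MvPolynomial (Sym2 (Fin n)) ℂ →+* MvPolynomial (Fin (n + edgeCount E)) ℂ) := by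
      rw [impIdeal, Ideal.span_le]
      rintro f ⟨i, j, hij, hnij, hcard, rfl⟩
      exact phiR_gen_eq_zero E hE hij hnij hcard
    exact hle hg
  -- the kernel of `φ` is exactly the saturation
  have hker : ∀ f : MvPolynomial (Sym2 (Fin n)) ℂ, f ∈ satPG E ↔ phiR E f = 0 := by
    intro f
    constructor
    · rintro ⟨m, hm⟩
      have h1 : phiR E (theta0 n ^ m * f) = 0 := hIG _ hm
      rw [_root_.map_mul, map_pow] at h1
      rcases mul_eq_zero.mp h1 with h | h
      · exact absurd h (pow_ne_zero m (phiR_theta0_ne_zero E hn0))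
      · exact h
    · exact ker_le_satPG E hE f
  -- the induced injective algebra map from the quotient into the fraction field
  set f0 : MvPolynomial (Sym2 (Fin n)) ℂ →ₐ[ℂ] KKr E :=
    (IsScalarTower.toAlgHom ℂ (MvPolynomial (Fin (n + edgeCount E)) ℂ) (KKr E)).comp
      (phiR E) with hf0
  have hf0I : ∀ a ∈ satPG E, f0 a = 0 := by
    intro a ha
    show algebraMap (MvPolynomial (Fin (n + edgeCount E)) ℂ) (KKr E) (phiR E a) = 0
    rw [(hker a).mp ha, map_zero]
  set ψ : (MvPolynomial (Sym2 (Fin n)) ℂ ⧸ satPG E) →ₐ[ℂ] KKr E :=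
    Ideal.Quotient.liftₐ (satPG E) f0 hf0I with hψ
  have hψmk : ∀ r : MvPolynomial (Sym2 (Fin n)) ℂ,
      ψ (Ideal.Quotient.mk (satPG E) r)
        = algebraMap (MvPolynomial (Fin (n + edgeCount E)) ℂ) (KKr E) (phiR E r) := by
    intro r
    rw [hψ, Ideal.Quotient.liftₐ_apply]
    rfl
  have hinj : Function.Injective ψ := by
    rw [injective_iff_map_eq_zero]
    intro x hx
    rcases Ideal.Quotient.mk_surjective x with ⟨r, rfl⟩
    rw [hψmk] at hx
    have h2 : phiR E r = 0 := by
      apply iotaP_injective E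
      rw [map_zero]
      exact hx
    exact Ideal.Quotient.eq_zero_iff_mem.2 ((hker r).2 h2)
  have hne_top : satPG E ≠ ⊤ := by
    intro htop
    have h1 : (1 : MvPolynomial (Sym2 (Fin n)) ℂ) ∈ satPG E := htop ▸ Submodule.mem_top
    have h2 := (hker 1).1 h1
    rw [_root_.map_one] at h2
    exact one_ne_zero h2
  haveI : Nontrivial (MvPolynomial (Sym2 (Fin n)) ℂ ⧸ satPG E) :=
    Ideal.Quotient.nontrivial_iff.mpr hne_top
  haveI : IsDomain (MvPolynomial (Sym2 (Fin n)) ℂ ⧸ satPG E) :=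
    Function.Injective.isDomain (ψ : (MvPolynomial (Sym2 (Fin n)) ℂ ⧸ satPG E) →+* KKr E) hinj
  letI : Algebra (MvPolynomial (Sym2 (Fin n)) ℂ ⧸ satPG E) (KKr E) :=
    (ψ : (MvPolynomial (Sym2 (Fin n)) ℂ ⧸ satPG E) →+* KKr E).toAlgebra
  haveI : IsScalarTower ℂ (MvPolynomial (Sym2 (Fin n)) ℂ ⧸ satPG E) (KKr E) :=
    IsScalarTower.of_algebraMap_eq' (AlgHom.comp_algebraMap ψ).symm
  haveI : IsFractionRing (MvPolynomial (Sym2 (Fin n)) ℂ ⧸ satPG E) (KKr E) := by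
    constructor
    constructor
    · rintro ⟨y, hy⟩
      have hy0 : y ≠ 0 := nonZeroDivisors.ne_zero hy
      have hψy : ψ y ≠ 0 := fun h => hy0 (hinj (by rw [h, map_zero]))
      exact isUnit_iff_ne_zero.2 hψy
    · intro z
      rcases surj_fracSet E hn0 hE z with ⟨a, b, hb, hab⟩
      have hbmem : Ideal.Quotient.mk (satPG E) b
          ∈ nonZeroDivisors (MvPolynomial (Sym2 (Fin n)) ℂ ⧸ satPG E) := by
        apply mem_nonZeroDivisors_of_ne_zero
        intro h0
        exact hb ((hker b).1 (Ideal.Quotient.eq_zero_iff_mem.1 h0))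
      refine ⟨(Ideal.Quotient.mk _ a, ⟨Ideal.Quotient.mk _ b, hbmem⟩), ?_⟩
      show z * ψ (Ideal.Quotient.mk _ b) = ψ (Ideal.Quotient.mk _ a)
      rw [hψmk, hψmk]
      exact hab
    · intro x y h
      refine ⟨1, ?_⟩
      have hxy : x = y := hinj h
      rw [hxy]
  exact ⟨(FractionRing.algEquiv (MvPolynomial (Sym2 (Fin n)) ℂ ⧸ satPG E)
    (KKr E)).restrictScalars ℂ⟩
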